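/- For every odd integer k ≥ 3 and every α ∈ (0,1), the integrals I_{k,α} := ∫₀^{π/2} sin(kθ)/(sin θ)^{2α} dθ satisfy the recurrence (k/2 - α) I_{k,α} = (k/2 - 1 + α) I_{k-2,α}. -/

import Mathlib

open Real intervalIntegral MeasureTheory Set Filter Topology

lemma integrable_aux (m α : ℝ) (hm : 0 ≤ m) (hα0 : 0 < α) (hα1 : α < 1) :
    IntervalIntegrable (fun θ => Real.sin (m * θ) / Real.sin θ ^ (2 * α)) volume 0 (π/2) := by
  have hπ := pi_pos
  have hC : IntervalIntegrable (fun θ : ℝ => m * (π/2) ^ (2*α) * θ ^ (1 - 2*α))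
      volume 0 (π/2) := (intervalIntegrable_rpow' (by linarith)).const_mul _
  refine hC.mono_fun' (Measurable.aestronglyMeasurable (by fun_prop)) ?_
  rw [Filter.EventuallyLE, ae_restrict_iff' measurableSet_uIoc]
  refine Eventually.of_forall fun θ hθ => ?_
  rw [uIoc_of_le (by positivity)] at hθ
  obtain ⟨h0, h2⟩ := hθ
  have hs : 0 < Real.sin θ := Real.sin_pos_of_pos_of_lt_pi h0 (lt_of_le_of_lt h2 (by linarith))
  have hsge : 2/π * θ ≤ Real.sin θ := Real.mul_le_sin h0.le h2
  have h1 : |Real.sin (m*θ)| ≤ m * θ := by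
    calc |Real.sin (m*θ)| ≤ |m*θ| := Real.abs_sin_le_abs
    _ = m * θ := abs_of_nonneg (by positivity)
  have h3 : (2/π * θ) ^ (2*α) ≤ Real.sin θ ^ (2*α) :=
    Real.rpow_le_rpow (by positivity) hsge (by positivity)
  have h4 : ((2:ℝ)/π * θ) ^ (2*α) = (2/π) ^ (2*α) * θ ^ (2*α) :=
    Real.mul_rpow (by positivity) h0.le
  have h5 : (0:ℝ) < (2/π) ^ (2*α) * θ ^ (2*α) := by positivity
  calc ‖Real.sin (m * θ) / Real.sin θ ^ (2 * α)‖
      = |Real.sin (m*θ)| / Real.sin θ ^ (2*α) := by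
        rw [norm_div, Real.norm_eq_abs, Real.norm_eq_abs, abs_of_pos (Real.rpow_pos_of_pos hs _)]
    _ ≤ (m * θ) / ((2/π) ^ (2*α) * θ ^ (2*α)) :=
        div_le_div₀ (by positivity) h1 h5 (h4 ▸ h3)
    _ = m * (π/2) ^ (2*α) * θ ^ (1 - 2*α) := by
        have e1 : θ ^ (1 - 2*α) = θ / θ ^ (2*α) := by
          rw [Real.rpow_sub h0, Real.rpow_one]
        have e2 : (π/2:ℝ) ^ (2*α) = ((2/π) ^ (2*α))⁻¹ := by
          rw [← Real.inv_rpow (by positivity), inv_div]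
        rw [e1, e2]
        field_simp

lemma deriv_aux (km α : ℝ) (hkm : 0 < km) (hα0 : 0 < α) (hα1 : α < 1) {θ : ℝ}
    (hθ : θ ∈ Set.Ioo 0 (π/2)) :
    HasDerivAt (fun t => -2 * (Real.sin ((km - 1) * t) * Real.sin t ^ (1 - 2*α)))
      ((2*α - km) * (Real.sin (km * θ) / Real.sin θ ^ (2*α)) +
        (km - 2 + 2*α) * (Real.sin ((km - 2) * θ) / Real.sin θ ^ (2*α))) θ := by
  have hπ := pi_pos
  have hs : 0 < Real.sin θ := Real.sin_pos_of_pos_of_lt_pi hθ.1 (by nlinarith [hθ.2])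
  have h1 : HasDerivAt (fun t : ℝ => Real.sin ((km - 1) * t))
      (Real.cos ((km - 1) * θ) * (km - 1)) θ := by
    simpa using ((hasDerivAt_id θ).const_mul (km - 1)).sin
  have h2 : HasDerivAt (fun t : ℝ => Real.sin t ^ (1 - 2*α))
      (Real.cos θ * (1 - 2*α) * Real.sin θ ^ (1 - 2*α - 1)) θ :=
    (Real.hasDerivAt_sin θ).rpow_const (Or.inl hs.ne')
  have h3 := (h1.mul h2).const_mul (-2)
  refine h3.congr_deriv ?_
  symm
  have e0 : Real.sin θ ^ (2*α) ≠ 0 := (Real.rpow_pos_of_pos hs _).ne'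
  have e1 : Real.sin θ ^ (1 - 2*α) = Real.sin θ / Real.sin θ ^ (2*α) := by
    rw [Real.rpow_sub hs, Real.rpow_one]
  have e2 : Real.sin θ ^ (1 - 2*α - 1) = 1 / Real.sin θ ^ (2*α) := by
    rw [show (1 - 2*α - 1 : ℝ) = 0 - 2*α by ring, Real.rpow_sub hs, Real.rpow_zero]
  have t1 : Real.sin (km * θ) = Real.sin ((km-1)*θ) * Real.cos θ + Real.cos ((km-1)*θ) * Real.sin θ := by
    rw [show km * θ = (km-1)*θ + θ by ring, Real.sin_add]
  have t2 : Real.sin ((km - 2) * θ) = Real.sin ((km-1)*θ) * Real.cos θ - Real.cos ((km-1)*θ) * Real.sin θ := by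
    rw [show (km-2) * θ = (km-1)*θ - θ by ring, Real.sin_sub]
  rw [t1, t2, e1, e2]
  field_simp
  ring

lemma tendsto_zero_aux (c α : ℝ) (hα0 : 0 < α) (hα1 : α < 1) :
    Tendsto (fun t => -2 * (Real.sin (c * t) * Real.sin t ^ (1 - 2*α)))
      (𝓝[>] (0:ℝ)) (𝓝 0) := by
  have hπ := pi_pos
  have hmono : 𝓝[>] (0:ℝ) ≤ 𝓝[≠] (0:ℝ) :=
    nhdsWithin_mono 0 fun x hx => ne_of_gt hx
  have L1 : Tendsto (fun t => Real.sin (c * t) / t) (𝓝[>] (0:ℝ)) (𝓝 c) := by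
    have h : HasDerivAt (fun t : ℝ => Real.sin (c * t)) c 0 := by
      simpa using ((hasDerivAt_id (0:ℝ)).const_mul c).sin
    rw [hasDerivAt_iff_tendsto_slope] at h
    refine (h.mono_left hmono).congr fun t => ?_
    simp [slope_def_field, slope, inv_mul_eq_div]
  have L2 : Tendsto (fun t => (Real.sin t / t) ^ (1 - 2*α)) (𝓝[>] (0:ℝ)) (𝓝 1) := by
    have h : HasDerivAt (fun t : ℝ => Real.sin t) 1 0 := by
      simpa using Real.hasDerivAt_sin 0
    rw [hasDerivAt_iff_tendsto_slope] at h
    have h2 : Tendsto (fun t => Real.sin t / t) (𝓝[>] (0:ℝ)) (𝓝 1) := by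
      refine (h.mono_left hmono).congr fun t => ?_
      simp [slope_def_field, slope, inv_mul_eq_div]
    have hc : ContinuousAt (fun x : ℝ => x ^ (1 - 2*α)) 1 :=
      Real.continuousAt_rpow_const 1 _ (Or.inl one_ne_zero)
    have := hc.tendsto.comp h2
    simpa [Function.comp_def] using this
  have L3 : Tendsto (fun t : ℝ => t ^ (2 - 2*α)) (𝓝[>] (0:ℝ)) (𝓝 0) := by
    have hc : ContinuousAt (fun x : ℝ => x ^ (2 - 2*α)) 0 :=
      Real.continuousAt_rpow_const 0 _ (Or.inr (by linarith))
    have := hc.tendsto.mono_left (nhdsWithin_le_nhds (s := Set.Ioi (0:ℝ)))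
    simpa [Real.zero_rpow (show (2 - 2*α : ℝ) ≠ 0 by linarith)] using this
  have comb : Tendsto (fun t => -2 * (Real.sin (c * t) / t * ((Real.sin t / t) ^ (1 - 2*α) * t ^ (2 - 2*α))))
      (𝓝[>] (0:ℝ)) (𝓝 (-2 * (c * (1 * 0)))) := (L1.mul (L2.mul L3)).const_mul (-2)
  rw [show (-2 * (c * (1 * (0:ℝ)))) = 0 by ring] at comb
  refine comb.congr' ?_
  filter_upwards [Ioo_mem_nhdsGT_of_mem (show (0:ℝ) ∈ Ico 0 π from ⟨le_refl 0, hπ⟩)] with t ht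
  have ht0 : (0:ℝ) < t := ht.1
  have hst : 0 < Real.sin t := Real.sin_pos_of_pos_of_lt_pi ht0 (by nlinarith [ht.2])
  have e1 : (Real.sin t / t) ^ (1 - 2*α) = Real.sin t ^ (1 - 2*α) / t ^ (1 - 2*α) :=
    Real.div_rpow hst.le ht0.le _
  have e2 : t ^ (2 - 2*α) = t ^ (1 - 2*α) * t := by
    rw [show (2 - 2*α : ℝ) = (1 - 2*α) + 1 by ring, Real.rpow_add ht0, Real.rpow_one]
  have e3 : t ^ (1 - 2*α) ≠ 0 := (Real.rpow_pos_of_pos ht0 _).ne'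
  rw [e1, e2]
  field_simp

theorem I_k_alpha_recurrence (k : ℕ) (hk : Odd k) (hk3 : 3 ≤ k) (α : ℝ)
    (hα0 : 0 < α) (hα1 : α < 1) :
    ((k : ℝ) / 2 - α) * ∫ θ in (0:ℝ)..(π/2), Real.sin (k * θ) / Real.sin θ ^ (2 * α) =
      ((k : ℝ) / 2 - 1 + α) *
        ∫ θ in (0:ℝ)..(π/2), Real.sin ((k - 2 : ℝ) * θ) / Real.sin θ ^ (2 * α) := by
  have hπ := pi_pos
  obtain ⟨n, hn⟩ := hk
  have hK : (3:ℝ) ≤ (k:ℝ) := by exact_mod_cast hk3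
  have hI1 := integrable_aux (k:ℝ) α (by positivity) hα0 hα1
  have hI2 := integrable_aux ((k:ℝ) - 2) α (by linarith) hα0 hα1
  set g : ℝ → ℝ := fun θ =>
    (2*α - (k:ℝ)) * (Real.sin ((k:ℝ) * θ) / Real.sin θ ^ (2*α)) +
      ((k:ℝ) - 2 + 2*α) * (Real.sin (((k:ℝ) - 2) * θ) / Real.sin θ ^ (2*α)) with hgdef
  have hg : IntervalIntegrable g volume 0 (π/2) :=
    (hI1.const_mul _).add (hI2.const_mul _)
  have hb : Tendsto (fun t => -2 * (Real.sin (((k:ℝ) - 1) * t) * Real.sin t ^ (1 - 2*α)))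
      (𝓝[<] (π/2)) (𝓝 0) := by
    have hc1 : ContinuousAt (fun t : ℝ => Real.sin t ^ (1 - 2*α)) (π/2) := by
      have h := (Real.continuousAt_rpow_const (Real.sin (π/2)) (1 - 2*α)
        (Or.inl (by rw [Real.sin_pi_div_two]; norm_num))).comp Real.continuous_sin.continuousAt
      simpa [Function.comp_def] using h
    have hc : ContinuousAt (fun t => -2 * (Real.sin (((k:ℝ) - 1) * t) * Real.sin t ^ (1 - 2*α))) (π/2) := by
      exact continuousAt_const.mul
        (((Real.continuous_sin.comp (continuous_const.mul continuous_id)).continuousAt).mul hc1)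
    have hval : -2 * (Real.sin (((k:ℝ) - 1) * (π/2)) * Real.sin (π/2) ^ (1 - 2*α)) = 0 := by
      have : ((k:ℝ) - 1) * (π/2) = n * π := by
        have : (k:ℝ) = 2*n + 1 := by exact_mod_cast hn
        rw [this]; ring
      rw [this, Real.sin_nat_mul_pi]; ring
    have := hc.tendsto.mono_left (nhdsWithin_le_nhds (s := Set.Iio (π/2)))
    rwa [hval] at this
  have ha := tendsto_zero_aux ((k:ℝ) - 1) α hα0 hα1
  have hzero : (∫ θ in (0:ℝ)..(π/2), g θ) = 0 - 0 := by
    refine integral_eq_sub_of_hasDerivAt_of_tendsto (by positivity)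
      (fun θ hθ => ?_) hg ha hb
    exact deriv_aux (k:ℝ) α (by linarith) hα0 hα1 hθ
  rw [hgdef, integral_add (hI1.const_mul _) (hI2.const_mul _),
    intervalIntegral.integral_const_mul, intervalIntegral.integral_const_mul] at hzero
  linarith [hzero]
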